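/- Let (X_t)_{t∈ℕ} be a sequence of random variables such that, under Q, each X_t is conditionally symmetric around 0 given F_{t−1} (i.e., the conditional law of X_t equals that of −X_t). Then S_t := exp( Σ_{s≤t} X_s − (1/2) Σ_{s≤t} X_s² ) is a nonnegative supermartingale under Q. -/

import Mathlib

open MeasureTheory Filter
open scoped ENNReal

private lemma aux_exp_le (x : ℝ) : x - x ^ 2 / 2 ≤ 1 / 2 := by nlinarith [sq_nonneg (x - 1)]

private lemma aux_two (x : ℝ) :
    Real.exp (x - x ^ 2 / 2) + Real.exp (-x - (-x) ^ 2 / 2) ≤ 2 := by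
  have h := Real.cosh_le_exp_half_sq x
  have hc : Real.cosh x = (Real.exp x + Real.exp (-x)) / 2 := Real.cosh_eq x
  have he : Real.exp (x - x ^ 2 / 2) + Real.exp (-x - (-x) ^ 2 / 2)
      = (Real.exp x + Real.exp (-x)) * Real.exp (-(x ^ 2 / 2)) := by
    rw [mul_comm, mul_add, ← Real.exp_add, ← Real.exp_add]; ring_nf
  rw [he]
  have h2 : Real.exp x + Real.exp (-x) ≤ 2 * Real.exp (x ^ 2 / 2) := by
    rw [hc] at h; linarith
  calc (Real.exp x + Real.exp (-x)) * Real.exp (-(x ^ 2 / 2))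
      ≤ 2 * Real.exp (x ^ 2 / 2) * Real.exp (-(x ^ 2 / 2)) := by
        exact mul_le_mul_of_nonneg_right h2 (Real.exp_pos _).le
    _ = 2 := by rw [mul_assoc, ← Real.exp_add]; simp

/-- Supermartingale under conditional symmetry: if each `X (t+1)` is conditionally
symmetric around `0` given `ℱ t` (the conditional law of `X (t+1)` equals that of
`−X (t+1)`, expressed via bounded measurable test functions), then
`S_t := exp(Σ_{s≤t} X_s − (1/2) Σ_{s≤t} X_s²)` is a nonnegative supermartingale. -/
theorem symmetric_exponential_supermartingale {Ω : Type*} {m0 : MeasurableSpace Ω}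
    (μ : Measure Ω) [IsProbabilityMeasure μ] (ℱ : Filtration ℕ m0)
    (X : ℕ → Ω → ℝ) (hX : ∀ t : ℕ, StronglyMeasurable[ℱ (t + 1)] (X (t + 1)))
    (hsym : ∀ (t : ℕ) (f : ℝ → ℝ), Measurable f → (∃ C, ∀ x, |f x| ≤ C) →
      μ[fun ω => f (X (t + 1) ω) | ℱ t] =ᵐ[μ] μ[fun ω => f (-X (t + 1) ω) | ℱ t]) :
    Supermartingale
      (fun t ω => Real.exp ((∑ s ∈ Finset.range t, X (s + 1) ω) -
        (1 / 2) * ∑ s ∈ Finset.range t, (X (s + 1) ω) ^ 2)) ℱ μ ∧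
    ∀ t ω, 0 ≤ Real.exp ((∑ s ∈ Finset.range t, X (s + 1) ω) -
        (1 / 2) * ∑ s ∈ Finset.range t, (X (s + 1) ω) ^ 2) := by
  set S : ℕ → Ω → ℝ := fun t ω => Real.exp ((∑ s ∈ Finset.range t, X (s + 1) ω) -
      (1 / 2) * ∑ s ∈ Finset.range t, (X (s + 1) ω) ^ 2) with hS
  set f : ℝ → ℝ := fun x => Real.exp (x - x ^ 2 / 2) with hf
  have hfmeas : Measurable f := by fun_prop
  have hfbd : ∀ x, |f x| ≤ Real.exp (1 / 2) := fun x => by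
    rw [abs_of_pos (Real.exp_pos _)]
    exact Real.exp_le_exp.mpr (aux_exp_le x)
  -- adaptedness
  have hadp : StronglyAdapted ℱ S := by
    intro t
    apply Continuous.comp_stronglyMeasurable Real.continuous_exp
    apply StronglyMeasurable.sub
    · apply Finset.stronglyMeasurable_fun_sum
      intro s hs
      exact (hX s).mono (ℱ.mono (Finset.mem_range.mp hs))
    · apply StronglyMeasurable.const_mul
      apply Finset.stronglyMeasurable_fun_sum
      intro s hs
      exact ((hX s).mono (ℱ.mono (Finset.mem_range.mp hs))).pow 2
  -- bound on S
  have hSbd : ∀ t ω, ‖S t ω‖ ≤ Real.exp (t * (1 / 2)) := by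
    intro t ω
    rw [Real.norm_eq_abs, abs_of_pos (Real.exp_pos _)]
    apply Real.exp_le_exp.mpr
    have : (∑ s ∈ Finset.range t, X (s + 1) ω) -
        (1 / 2) * ∑ s ∈ Finset.range t, (X (s + 1) ω) ^ 2
        = ∑ s ∈ Finset.range t, (X (s + 1) ω - (X (s + 1) ω) ^ 2 / 2) := by
      rw [Finset.sum_sub_distrib, Finset.mul_sum]; congr 1; apply Finset.sum_congr rfl
      intro s _; ring
    rw [this]
    calc ∑ s ∈ Finset.range t, (X (s + 1) ω - (X (s + 1) ω) ^ 2 / 2)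
        ≤ ∑ s ∈ Finset.range t, (1 / 2 : ℝ) :=
          Finset.sum_le_sum fun s _ => aux_exp_le _
      _ = t * (1 / 2) := by simp [mul_comm]
  have hint : ∀ t, Integrable (S t) μ := fun t =>
    (integrable_const (Real.exp (t * (1 / 2)))).mono'
      ((hadp t).mono (ℱ.le t)).aestronglyMeasurable (ae_of_all _ (hSbd t))
  -- the conditional expectation step
  have hstep : ∀ t, μ[S (t + 1)|ℱ t] ≤ᵐ[μ] S t := by
    intro t
    set g : Ω → ℝ := fun ω => f (X (t + 1) ω) with hg
    set g' : Ω → ℝ := fun ω => f (-X (t + 1) ω) with hg'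
    have hgm : AEStronglyMeasurable g μ :=
      (hfmeas.comp ((hX t).mono (ℱ.le _)).measurable).aestronglyMeasurable
    have hg'm : AEStronglyMeasurable g' μ :=
      (hfmeas.comp ((hX t).mono (ℱ.le _)).measurable.neg).aestronglyMeasurable
    have hgi : Integrable g μ := (integrable_const (Real.exp (1 / 2))).mono' hgm
      (ae_of_all _ fun ω => (Real.norm_eq_abs _) ▸ hfbd _)
    have hg'i : Integrable g' μ := (integrable_const (Real.exp (1 / 2))).mono' hg'm
      (ae_of_all _ fun ω => (Real.norm_eq_abs _) ▸ hfbd _)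
    have hsymm : μ[g|ℱ t] =ᵐ[μ] μ[g'|ℱ t] := hsym t f hfmeas ⟨Real.exp (1 / 2), hfbd⟩
    have hsum_le : μ[fun ω => g ω + g' ω|ℱ t] ≤ᵐ[μ] fun _ => (2 : ℝ) := by
      have h1 : μ[fun ω => g ω + g' ω|ℱ t] ≤ᵐ[μ] μ[fun _ => (2 : ℝ)|ℱ t] :=
        condExp_mono (hgi.add hg'i) (integrable_const 2) (ae_of_all _ fun ω => aux_two _)
      have h2 : μ[fun _ => (2 : ℝ)|ℱ t] = fun _ => (2 : ℝ) := condExp_const (ℱ.le t) 2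
      rwa [h2] at h1
    have hadd : μ[fun ω => g ω + g' ω|ℱ t] =ᵐ[μ] μ[g|ℱ t] + μ[g'|ℱ t] := condExp_add hgi hg'i _
    have hle1 : μ[g|ℱ t] ≤ᵐ[μ] fun _ => (1 : ℝ) := by
      filter_upwards [hsum_le, hadd, hsymm] with ω h1 h2 h3
      simp only [Pi.add_apply] at h2
      rw [h2, h3] at h1
      linarith
    have hSeq : S (t + 1) = S t * g := by
      funext ω
      simp only [hS, hg, hf, Pi.mul_apply, Finset.sum_range_succ, ← Real.exp_add]
      congr 1; ring
    have hpull : μ[S (t + 1)|ℱ t] =ᵐ[μ] S t * μ[g|ℱ t] := by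
      rw [hSeq]
      exact condExp_mul_of_stronglyMeasurable_left (hadp t) (hSeq ▸ hint (t + 1)) hgi
    filter_upwards [hpull, hle1] with ω h1 h2
    rw [h1]
    have : S t ω * (μ[g|ℱ t]) ω ≤ S t ω * 1 :=
      mul_le_mul_of_nonneg_left h2 (Real.exp_pos _).le
    simpa using this
  exact ⟨supermartingale_nat hadp hint hstep, fun t ω => (Real.exp_pos _).le⟩
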